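/- (Per-iteration inequality (3.9a)) Fix τ, λ > 0, ε, δ ≥ 0 and points xᵏ, xᵏ⁺¹ ∈ ℝⁿ, ȳᵏ, yᵏ⁺¹, ȳᵏ⁺¹ ∈ ℝᵐ satisfying conditions (i), (ii), (iii) of one Algorithm 1 iteration with stepsizes τ, λ and tolerances ε, δ. Then for all x ∈ ℝⁿ and y ∈ ℝᵐ: L(xᵏ⁺¹, y) − L(x, yᵏ⁺¹) ≤ (1/(2τ))(‖y − ȳᵏ‖²_S − ‖y − ȳᵏ⁺¹‖²_S) + (1/(2λ))(‖x − xᵏ‖²_{AᵀRA} − ‖x − xᵏ⁺¹‖²_{AᵀRA}) + √(ε/τ)·‖y − ȳᵏ⁺¹‖_S + 2ε + δ − (1/(2λ))⟨A(xᵏ − xᵏ⁺¹), (R − τλS⁻¹)A(xᵏ − xᵏ⁺¹)⟩ − (1/(2τ))‖ȳᵏ − yᵏ⁺¹‖²_S. -/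

import Mathlib

open Matrix Finset

/-- squared M-norm: ⟨x, M x⟩ -/
noncomputable def sqnorm {d : ℕ} (M : Matrix (Fin d) (Fin d) ℝ) (x : Fin d → ℝ) : ℝ :=
  x ⬝ᵥ M.mulVec x

/-- M-norm: √⟨x, M x⟩ -/
noncomputable def mnorm {d : ℕ} (M : Matrix (Fin d) (Fin d) ℝ) (x : Fin d → ℝ) : ℝ :=
  Real.sqrt (x ⬝ᵥ M.mulVec x)

/-- The Lagrangian L(x,y) = f(x) + ⟨Ax, y⟩ − g(y). -/
noncomputable def Lag {n m : ℕ} (f : (Fin n → ℝ) → ℝ) (g : (Fin m → ℝ) → ℝ)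
    (A : Matrix (Fin m) (Fin n) ℝ) (x : Fin n → ℝ) (y : Fin m → ℝ) : ℝ :=
  f x + A.mulVec x ⬝ᵥ y - g y

section AuxLemmas

lemma dot_symm {m : ℕ} {S : Matrix (Fin m) (Fin m) ℝ} (hsym : Sᵀ = S) (a b : Fin m → ℝ) :
    a ⬝ᵥ S.mulVec b = b ⬝ᵥ S.mulVec a := by
  rw [Matrix.dotProduct_mulVec, dotProduct_comm]
  congr 1
  conv_lhs => rw [← hsym]
  rw [Matrix.vecMul_transpose]

lemma hsym_of_posdef {m : ℕ} {S : Matrix (Fin m) (Fin m) ℝ} (hS : S.PosDef) : Sᵀ = S := by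
  ext i j
  have := congrFun (congrFun hS.1 i) j
  simpa using this

lemma sqnorm_comm {m : ℕ} (M : Matrix (Fin m) (Fin m) ℝ) (a b : Fin m → ℝ) :
    sqnorm M (a - b) = sqnorm M (b - a) := by
  rw [show b - a = -(a - b) by abel]
  simp only [sqnorm, Matrix.mulVec_neg, neg_dotProduct, dotProduct_neg]
  ring

lemma three_point {m : ℕ} {S : Matrix (Fin m) (Fin m) ℝ} (hsym : Sᵀ = S) (a b c : Fin m → ℝ) :
    (a - b) ⬝ᵥ S.mulVec (c - b)
      = 1/2 * (sqnorm S (c - b) + sqnorm S (a - b) - sqnorm S (c - a)) := by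
  simp only [sqnorm, Matrix.mulVec_sub, sub_dotProduct, dotProduct_sub]
  linear_combination (1/2) * dot_symm hsym a c - (1/2) * dot_symm hsym a b
    - (1/2) * dot_symm hsym b c

lemma interp {m : ℕ} (S : Matrix (Fin m) (Fin m) ℝ) (t : ℝ) (p q : Fin m → ℝ) :
    sqnorm S (p + t • q)
      = (1 - t) * sqnorm S p + t * sqnorm S (p + q) - t * (1 - t) * sqnorm S q := by
  simp only [sqnorm, Matrix.mulVec_add, Matrix.mulVec_smul, add_dotProduct,
    dotProduct_add, smul_dotProduct, dotProduct_smul, smul_eq_mul]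
  ring

lemma dotARA {n m : ℕ} (A : Matrix (Fin m) (Fin n) ℝ) (Rm : Matrix (Fin m) (Fin m) ℝ)
    (w z : Fin n → ℝ) :
    ((Aᵀ * Rm * A).mulVec w) ⬝ᵥ z = (A.mulVec z) ⬝ᵥ Rm.mulVec (A.mulVec w) := by
  rw [dotProduct_comm, Matrix.mul_assoc, ← Matrix.mulVec_mulVec, ← Matrix.mulVec_mulVec,
    Matrix.dotProduct_mulVec, Matrix.vecMul_transpose]

lemma young {m : ℕ} {S : Matrix (Fin m) (Fin m) ℝ} (hS : S.PosDef) {τ : ℝ} (hτ : 0 < τ)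
    (u v : Fin m → ℝ) :
    u ⬝ᵥ v ≤ (τ/2) * (u ⬝ᵥ S⁻¹.mulVec u) + (1/(2*τ)) * (v ⬝ᵥ S.mulVec v) := by
  have hsym : Sᵀ = S := hsym_of_posdef hS
  have hnn : ∀ a, 0 ≤ a ⬝ᵥ S.mulVec a := by
    intro a
    rcases eq_or_ne a 0 with rfl | h
    · simp
    · have := hS.dotProduct_mulVec_pos h; simpa using this.le
  have hinv : S * S⁻¹ = 1 := Matrix.mul_nonsing_inv S (isUnit_iff_ne_zero.2 hS.det_pos.ne')
  have hSw : S.mulVec (S⁻¹.mulVec u) = u := by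
    rw [Matrix.mulVec_mulVec, hinv, Matrix.one_mulVec]
  have h0 := hnn (v - τ • S⁻¹.mulVec u)
  have hexp : (v - τ • S⁻¹.mulVec u) ⬝ᵥ S.mulVec (v - τ • S⁻¹.mulVec u)
      = v ⬝ᵥ S.mulVec v - 2*τ*(u ⬝ᵥ v) + τ^2 * (u ⬝ᵥ S⁻¹.mulVec u) := by
    rw [Matrix.mulVec_sub, Matrix.mulVec_smul, hSw]
    simp only [sub_dotProduct, dotProduct_sub, smul_dotProduct,
      dotProduct_smul, smul_eq_mul]
    have e1 : (S⁻¹.mulVec u) ⬝ᵥ S.mulVec v = v ⬝ᵥ u := by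
      rw [dot_symm hsym, hSw]
    have e2 : (S⁻¹.mulVec u) ⬝ᵥ u = u ⬝ᵥ S⁻¹.mulVec u := dotProduct_comm _ _
    have e3 : v ⬝ᵥ u = u ⬝ᵥ v := dotProduct_comm _ _
    rw [e1, e2, e3]; ring
  rw [hexp] at h0
  have h2 : 2*τ*(u ⬝ᵥ v) ≤ τ^2 * (u ⬝ᵥ S⁻¹.mulVec u) + v ⬝ᵥ S.mulVec v := by linarith
  rw [show (τ/2) * (u ⬝ᵥ S⁻¹.mulVec u) + (1/(2*τ)) * (v ⬝ᵥ S.mulVec v)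
      = (τ^2 * (u ⬝ᵥ S⁻¹.mulVec u) + v ⬝ᵥ S.mulVec v)/(2*τ) by field_simp]
  rw [le_div_iff₀ (by positivity)]
  linarith

lemma claimlem (τ σ d : ℝ) (hτ : 0 < τ) (hσ : 0 < σ) (hd : 0 ≤ d) :
    (1/(2*τ))*((τ*σ)/(d+τ*σ))^2*d^2 + (τ*σ^2)/2
      ≤ ((τ*σ)/(d+τ*σ))*σ*d + ((τ*σ)/(d+τ*σ))*(τ*σ^2) := by
  have hp : 0 < d + τ*σ := by positivity
  have hp' : d + τ*σ ≠ 0 := hp.ne'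
  have hτ' : τ ≠ 0 := hτ.ne'
  rw [← sub_nonneg]
  have e : ((τ*σ)/(d+τ*σ))*σ*d + ((τ*σ)/(d+τ*σ))*(τ*σ^2)
        - ((1/(2*τ))*((τ*σ)/(d+τ*σ))^2*d^2 + (τ*σ^2)/2)
      = (τ*σ^2/2) * (((d+τ*σ)^2 - d^2)/(d+τ*σ)^2) := by
    field_simp
    ring
  rw [e]
  apply mul_nonneg (by positivity)
  apply div_nonneg _ (by positivity)
  nlinarith [mul_nonneg hd (mul_nonneg hτ.le hσ.le), sq_nonneg (τ*σ)]

lemma approx_min {m : ℕ} {S : Matrix (Fin m) (Fin m) ℝ} (hS : S.PosDef)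
    {g : (Fin m → ℝ) → ℝ} (hg : ConvexOn ℝ Set.univ g)
    (c b w : Fin m → ℝ) {τ ε : ℝ} (hτ : 0 < τ) (hε : 0 ≤ ε)
    (hmin : ∀ z, g z - c ⬝ᵥ z + (1/(2*τ)) * sqnorm S (z - b)
        ≥ g w - c ⬝ᵥ w + (1/(2*τ)) * sqnorm S (w - b) - ε/2)
    (y : Fin m → ℝ) :
    g y - c ⬝ᵥ y + (1/(2*τ)) * sqnorm S (y - b)
      ≥ g w - c ⬝ᵥ w + (1/(2*τ)) * sqnorm S (w - b)
        + (1/(2*τ)) * sqnorm S (y - w)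
        - Real.sqrt (ε/τ) * mnorm S (y - w) - ε := by
  have hnn : ∀ a, 0 ≤ a ⬝ᵥ S.mulVec a := by
    intro a
    rcases eq_or_ne a 0 with rfl | h
    · simp
    · have := hS.dotProduct_mulVec_pos h; simpa using this.le
  have hdK' : mnorm S (y - w) ^ 2 = sqnorm S (y - w) := Real.sq_sqrt (hnn _)
  set K := sqnorm S (y - w) with hKdef
  set d := mnorm S (y - w) with hddef
  have hK0 : 0 ≤ K := hnn _
  have hd0 : 0 ≤ d := Real.sqrt_nonneg _
  clear_value K d
  have hdK : d^2 = K := hdK'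
  set σ := Real.sqrt (ε/τ) with hσdef
  have hσ0 : 0 ≤ σ := Real.sqrt_nonneg _
  have hσ2 : σ^2 = ε/τ := Real.sq_sqrt (div_nonneg hε hτ.le)
  have hσz' : ε = 0 → σ = 0 := by
    intro h; rw [hσdef, h]; simp
  clear_value σ
  have hεσ : ε = τ * σ^2 := by rw [hσ2]; field_simp
  set C := (g y - c ⬝ᵥ y + (1/(2*τ)) * sqnorm S (y - b))
      - (g w - c ⬝ᵥ w + (1/(2*τ)) * sqnorm S (w - b)) with hCdef
  suffices h : C ≥ (1/(2*τ))*K - σ*d - ε by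
    rw [hCdef] at h; linarith
  have key : ∀ t : ℝ, 0 < t → t ≤ 1 →
      t * C ≥ t*(1-t)*((1/(2*τ))*K) - ε/2 := by
    intro t ht0 ht1
    set z := w + t • (y - w) with hzdef
    have hz : z = (1-t) • w + t • y := by
      rw [hzdef]; ext i; simp [smul_eq_mul]; ring
    have hgz : g z ≤ (1-t) * g w + t * g y := by
      rw [hz]
      have := hg.2 (Set.mem_univ w) (Set.mem_univ y) (by linarith : (0:ℝ) ≤ 1 - t) ht0.le
        (by ring)
      simpa [smul_eq_mul] using this
    have hcz : c ⬝ᵥ z = (1-t)*(c ⬝ᵥ w) + t*(c ⬝ᵥ y) := by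
      rw [hz]
      simp only [dotProduct_add, dotProduct_smul, smul_eq_mul]
    have hzb : z - b = (w - b) + t • (y - w) := by rw [hzdef]; abel
    have hyb : y - b = (w - b) + (y - w) := by abel
    have hquad : sqnorm S (z - b)
        = (1-t) * sqnorm S (w - b) + t * sqnorm S (y - b) - t*(1-t)*K := by
      rw [hzb, interp, ← hyb, hKdef]
    have h := hmin z
    have h2 : (1-t) * g w + t * g y - c ⬝ᵥ z + (1/(2*τ)) * sqnorm S (z - b)
        ≥ g w - c ⬝ᵥ w + (1/(2*τ)) * sqnorm S (w - b) - ε/2 := by linarith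
    rw [hcz, hquad] at h2
    rw [hCdef]
    nlinarith [h2]
  clear_value C
  rcases eq_or_lt_of_le hε with hε0 | hε0
  · -- ε = 0
    have hσz : σ = 0 := hσz' hε0.symm
    have hC0 : 0 ≤ C := by
      have h1 := key 1 one_pos le_rfl
      rw [← hε0] at h1
      nlinarith [h1]
    rw [hσz, ← hε0]
    simp only [zero_mul, sub_zero]
    by_contra hc
    push_neg at hc
    set KK := (1/(2*τ))*K with hKKdef
    have hKK0 : 0 < KK := lt_of_le_of_lt hC0 hc
    clear_value KK
    set t := (KK - C)/(2*KK) with htdef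
    have ht0 : 0 < t := div_pos (by linarith) (by linarith)
    have ht1 : t ≤ 1 := by
      rw [htdef, div_le_one (by linarith)]
      linarith
    clear_value t
    have hk := key t ht0 ht1
    rw [← hε0] at hk
    have htKK : t * KK = (KK - C)/2 := by
      rw [htdef]; field_simp
    have hk' : t * C ≥ t * ((KK + C)/2) := by nlinarith [hk, htKK]
    have hfin : (KK + C)/2 ≤ C := le_of_mul_le_mul_left (by linarith) ht0
    linarith
  · -- ε > 0
    have hσpos : 0 < σ := by
      rcases lt_or_eq_of_le hσ0 with h | h
      · exact h
      · exfalso; rw [← h] at hεσ; simp at hεσ; linarith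
    have hp : 0 < d + τ*σ := by positivity
    set t := (τ*σ)/(d+τ*σ) with htdef
    have ht0 : 0 < t := by positivity
    have ht1 : t ≤ 1 := by
      rw [htdef, div_le_one hp]; linarith
    have c1 := claimlem τ σ d hτ hσpos hd0
    rw [← htdef] at c1
    clear_value t
    have hk := key t ht0 ht1
    have eε : τ*σ^2 = ε := hεσ.symm
    have c2 : (1/(2*τ))*t^2*K + ε/2 ≤ t*σ*d + t*ε := by
      rw [← eε, ← hdK]
      linarith [c1]
    have h3 : t * ((1/(2*τ))*K - σ*d - ε) ≤ t * C := by
      have e5 : t*(1-t)*((1/(2*τ))*K) = t*((1/(2*τ))*K) - (1/(2*τ))*t^2*K := by ring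
      have e6 : t * ((1/(2*τ))*K - σ*d - ε) = t*((1/(2*τ))*K) - t*σ*d - t*ε := by ring
      rw [e6]
      rw [e5] at hk
      linarith [hk, c2]
    exact le_of_mul_le_mul_left h3 ht0

end AuxLemmas

/-- Per-iteration inequality (3.9a). -/
theorem per_iteration_ineq {n m : ℕ}
    (f : (Fin n → ℝ) → ℝ) (g : (Fin m → ℝ) → ℝ)
    (hf : ConvexOn ℝ Set.univ f) (hg : ConvexOn ℝ Set.univ g)
    (A : Matrix (Fin m) (Fin n) ℝ)
    (S R : Matrix (Fin m) (Fin m) ℝ) (hS : S.PosDef) (hR : R.PosDef)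
    (τ lam : ℝ) (hτ : 0 < τ) (hlam : 0 < lam)
    (ε δ : ℝ) (hε : 0 ≤ ε) (hδ : 0 ≤ δ)
    (xk xk1 : Fin n → ℝ) (ybark yk1 ybark1 : Fin m → ℝ)
    (hi : ∀ y, g y ≥ g yk1 +
        ((1 / τ) • S.mulVec (ybark - yk1) + A.mulVec xk) ⬝ᵥ (y - yk1) - ε / 2)
    (hii : ∀ x, f x + A.mulVec x ⬝ᵥ yk1
        ≥ f xk1 + A.mulVec xk1 ⬝ᵥ yk1
          + ((1 / lam) • (Aᵀ * R * A).mulVec (xk - xk1)) ⬝ᵥ (x - xk1) - δ)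
    (hiii : ∀ y, g y - A.mulVec xk1 ⬝ᵥ y + (1 / (2 * τ)) * sqnorm S (y - ybark)
        ≥ g ybark1 - A.mulVec xk1 ⬝ᵥ ybark1
          + (1 / (2 * τ)) * sqnorm S (ybark1 - ybark) - ε / 2) :
    ∀ (x : Fin n → ℝ) (y : Fin m → ℝ),
      Lag f g A xk1 y - Lag f g A x yk1
        ≤ (1 / (2 * τ)) * (sqnorm S (y - ybark) - sqnorm S (y - ybark1))
          + (1 / (2 * lam)) * (sqnorm R (A.mulVec (x - xk)) - sqnorm R (A.mulVec (x - xk1)))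
          + Real.sqrt (ε / τ) * mnorm S (y - ybark1)
          + 2 * ε + δ
          - (1 / (2 * lam)) *
              (A.mulVec (xk - xk1) ⬝ᵥ (R - (τ * lam) • S⁻¹).mulVec (A.mulVec (xk - xk1)))
          - (1 / (2 * τ)) * sqnorm S (ybark - yk1) := by
  intro x y
  have hsymS : Sᵀ = S := hsym_of_posdef hS
  have hsymR : Rᵀ = R := hsym_of_posdef hR
  simp only [Lag]
  -- (F1): from hii at x
  have hF1 := hii x
  have e1 : ((1 / lam) • (Aᵀ * R * A).mulVec (xk - xk1)) ⬝ᵥ (x - xk1)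
      = (1/lam) * (1/2 * (sqnorm R (A.mulVec (xk - xk1)) + sqnorm R (A.mulVec (x - xk1))
          - sqnorm R (A.mulVec (x - xk)))) := by
    rw [smul_dotProduct, smul_eq_mul, dotARA A R (xk - xk1) (x - xk1),
      Matrix.mulVec_sub, Matrix.mulVec_sub,
      three_point hsymR (A.mulVec x) (A.mulVec xk1) (A.mulVec xk),
      sqnorm_comm R (A.mulVec xk) (A.mulVec x),
      ← Matrix.mulVec_sub, ← Matrix.mulVec_sub, ← Matrix.mulVec_sub]
  rw [e1] at hF1
  -- (F3): from hi at ybark1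
  have hF3 := hi ybark1
  have e3 : ((1 / τ) • S.mulVec (ybark - yk1) + A.mulVec xk) ⬝ᵥ (ybark1 - yk1)
      = (1/τ) * (1/2 * (sqnorm S (ybark - yk1) + sqnorm S (ybark1 - yk1)
          - sqnorm S (ybark1 - ybark)))
        + (A.mulVec xk ⬝ᵥ ybark1 - A.mulVec xk ⬝ᵥ yk1) := by
    rw [add_dotProduct, smul_dotProduct, smul_eq_mul,
      dotProduct_comm (S.mulVec (ybark - yk1)) (ybark1 - yk1),
      three_point hsymS ybark1 yk1 ybark,
      sqnorm_comm S ybark ybark1, dotProduct_sub]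
  rw [e3] at hF3
  -- (F4): strengthened form of hiii at y
  have hF4 := approx_min hS hg (A.mulVec xk1) ybark ybark1 hτ hε hiii y
  -- (F6): Young's inequality
  have hF6 := young hS hτ (A.mulVec (xk - xk1)) (yk1 - ybark1)
  have e6 : (yk1 - ybark1) ⬝ᵥ S.mulVec (yk1 - ybark1) = sqnorm S (ybark1 - yk1) := by
    rw [show (yk1 - ybark1) ⬝ᵥ S.mulVec (yk1 - ybark1) = sqnorm S (yk1 - ybark1) from rfl,
      sqnorm_comm]
  rw [e6] at hF6
  -- (F8): bilinearity expansion
  have hF8 : (A.mulVec (xk - xk1)) ⬝ᵥ (yk1 - ybark1)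
      = A.mulVec xk ⬝ᵥ yk1 - A.mulVec xk ⬝ᵥ ybark1 - A.mulVec xk1 ⬝ᵥ yk1
        + A.mulVec xk1 ⬝ᵥ ybark1 := by
    rw [Matrix.mulVec_sub, sub_dotProduct, dotProduct_sub, dotProduct_sub]
    ring
  -- (F7): expand the (R - τλ S⁻¹) term in the goal
  have hF7 : (1 / (2 * lam)) *
        (A.mulVec (xk - xk1) ⬝ᵥ (R - (τ * lam) • S⁻¹).mulVec (A.mulVec (xk - xk1)))
      = (1/(2*lam)) * sqnorm R (A.mulVec (xk - xk1))
        - (τ/2) * (A.mulVec (xk - xk1) ⬝ᵥ S⁻¹.mulVec (A.mulVec (xk - xk1))) := by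
    rw [Matrix.sub_mulVec, dotProduct_sub, Matrix.smul_mulVec,
      dotProduct_smul, smul_eq_mul,
      show A.mulVec (xk - xk1) ⬝ᵥ R.mulVec (A.mulVec (xk - xk1))
        = sqnorm R (A.mulVec (xk - xk1)) from rfl]
    field_simp
  rw [hF7]
  rw [hF8] at hF6
  ring_nf at hF1 hF3 hF4 hF6 ⊢
  linarith [hF1, hF3, hF4, hF6, hε]
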